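/- If g(x) is a power series in x with g(0) = 1 satisfying (1-x) g(x) = (1 + x q^r + x q^{d-r}) g(x q^d) + x q^d g(x q^{2d}), with |q| < 1 and d ≥ 3, 1 ≤ r < d/2, then g(x) = Σ_{n≥0} x^n (-q^r; q^d)_n (-q^{d-r}; q^d)_n / (q^d; q^d)_n. -/

import Mathlib

open scoped BigOperators
open PowerSeries

/-- The finite q-Pochhammer symbol `(a; q)_n`. -/
noncomputable def qPoch (a q : ℂ) (n : ℕ) : ℂ := ∏ j ∈ Finset.range n, (1 - a * q ^ j)

lemma qPoch_succ (a q : ℂ) (n : ℕ) :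
    qPoch a q (n + 1) = qPoch a q n * (1 - a * q ^ n) := Finset.prod_range_succ _ _

/-- If `g` is a power series in `x` with `g(0) = 1` satisfying the q-difference equation
`(1-x) g(x) = (1 + x q^r + x q^{d-r}) g(x q^d) + x q^d g(x q^{2d})`, then
`g(x) = Σ_{n≥0} x^n (-q^r; q^d)_n (-q^{d-r}; q^d)_n / (q^d; q^d)_n`, i.e. its `n`-th
coefficient is `(-q^r; q^d)_n (-q^{d-r}; q^d)_n / (q^d; q^d)_n`. -/
theorem qDifference_unique_solution (q : ℂ) (hq : ‖q‖ < 1)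
    (d r : ℕ) (hd : 3 ≤ d) (hr1 : 1 ≤ r) (hr2 : 2 * r < d)
    (g : PowerSeries ℂ) (h0 : PowerSeries.constantCoeff g = 1)
    (heq : (1 - PowerSeries.X) * g =
      (1 + PowerSeries.X * PowerSeries.C (q ^ r)
          + PowerSeries.X * PowerSeries.C (q ^ (d - r))) * PowerSeries.rescale (q ^ d) g
        + PowerSeries.X * PowerSeries.C (q ^ d) * PowerSeries.rescale (q ^ (2 * d)) g) :
    ∀ n : ℕ, PowerSeries.coeff n g =
      qPoch (-q ^ r) (q ^ d) n * qPoch (-q ^ (d - r)) (q ^ d) n /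
        qPoch (q ^ d) (q ^ d) n := by
  set u : ℂ := q ^ r with hu
  set v : ℂ := q ^ (d - r) with hv
  set w : ℂ := q ^ d with hw
  have hne : ∀ m : ℕ, m ≠ 0 → (1 : ℂ) - q ^ m ≠ 0 := by
    intro m hm h
    have h1 : ‖q ^ m‖ < 1 := by
      rw [norm_pow]
      exact pow_lt_one₀ (norm_nonneg _) hq hm
    have h2 : (q : ℂ) ^ m = 1 := (sub_eq_zero.mp h).symm
    rw [h2] at h1
    simp at h1
  have huv : u * v = w := by
    rw [hu, hv, hw, ← pow_add]
    congr 1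
    omega
  have hw2 : q ^ (2 * d) = w ^ 2 := by rw [hw, ← pow_mul, Nat.mul_comm]
  have hwpow : ∀ m : ℕ, m ≠ 0 → (1 : ℂ) - w ^ m ≠ 0 := by
    intro m hm
    rw [hw, ← pow_mul]
    exact hne _ (by positivity)
  have hQ : ∀ n : ℕ, qPoch w w n ≠ 0 := by
    intro n
    rw [qPoch]
    apply Finset.prod_ne_zero_iff.mpr
    intro j _
    have : w * w ^ j = w ^ (j + 1) := by ring
    rw [this]
    exact hwpow _ (by omega)
  intro n
  induction n with
  | zero => simp [qPoch, h0]
  | succ n ih =>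
    have h := congrArg (PowerSeries.coeff (n + 1)) heq
    simp only [sub_mul, add_mul, one_mul, map_sub, map_add, mul_assoc,
      coeff_succ_X_mul, coeff_C_mul, coeff_rescale, hw2] at h
    have hden : (1 : ℂ) - w * w ^ n ≠ 0 := by
      have : w * w ^ n = w ^ (n + 1) := by ring
      rw [this]
      exact hwpow _ (by omega)
    have key : PowerSeries.coeff (n + 1) g * (1 - w * w ^ n) =
        (qPoch (-u) w n * qPoch (-v) w n / qPoch w w n) *
          ((1 + u * w ^ n) * (1 + v * w ^ n)) := by
      rw [← ih]
      linear_combination h - (w ^ n * w ^ n * PowerSeries.coeff n g) * huv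
    have key2 : PowerSeries.coeff (n + 1) g * (1 - w * w ^ n) * qPoch w w n =
        qPoch (-u) w n * qPoch (-v) w n * ((1 + u * w ^ n) * (1 + v * w ^ n)) := by
      rw [key]
      field_simp
      rw [div_eq_iff (hQ n)]
      ring
    rw [qPoch_succ, qPoch_succ, qPoch_succ]
    rw [eq_div_iff (mul_ne_zero (hQ n) (by simpa using hden))]
    linear_combination key2
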